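/- Let μ(q) = Σ_{n≥0} (−1)^n q^{n^2} (q;q^2)_n / (−q^2;q^2)_n^2 be the second order mock theta function, with coefficients P_μ(n) given by μ(q) = Σ_{n≥0} P_μ(n) q^n, and let p_3(n) denote the number of 3-coloured partitions of n, with generating function Σ_{n≥0} p_3(n) q^n = 1/∏_{j≥1}(1−q^j)^3. Then for every n ≥ 0, P_μ(n) ≡ p_3(n) (mod 4). -/

import Mathlib

open PowerSeries Finset

section QSeries

variable (R : Type) [CommRing R]

noncomputable def aP (k : ℕ) : PowerSeries R :=
  ∏ j ∈ Finset.range k, (1 - (X : PowerSeries R) ^ (2 * j + 1))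

noncomputable def eP (k : ℕ) : PowerSeries R :=
  ∏ j ∈ Finset.range k, (1 - (X : PowerSeries R) ^ (2 * j + 2))

noncomputable def gP (k M n : ℕ) : PowerSeries R :=
  ∏ j ∈ Finset.range (M - n), (1 - (X : PowerSeries R) ^ (2 * (n + k + 1 + j)))

noncomputable def GnP (N n : ℕ) : PowerSeries R :=
  ∏ j ∈ Finset.range n, (1 - (X : PowerSeries R) ^ (2 * (N + 1 + j - n)))

noncomputable def gb : ℕ → ℕ → PowerSeries R
  | 0, 0 => 1
  | 0, _ + 1 => 0
  | _ + 1, 0 => 1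
  | N + 1, n + 1 => (X : PowerSeries R) ^ (2 * (N - n)) * gb N n + gb N (n + 1)

variable {R}

lemma gb_zero_of_lt : ∀ N n : ℕ, N < n → gb R N n = 0 := by
  intro N
  induction N with
  | zero =>
    intro n hn
    match n, hn with
    | n + 1, _ => rfl
  | succ N ih =>
    intro n hn
    match n, hn with
    | n + 1, hn =>
      show (X : PowerSeries R) ^ (2 * (N - n)) * gb R N n + gb R N (n + 1) = 0
      rw [ih n (by omega), ih (n + 1) (by omega), mul_zero, add_zero]

lemma gb_zero_right : ∀ N : ℕ, gb R N 0 = 1 := by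
  intro N; cases N <;> rfl

lemma aP_succ (k : ℕ) : aP R (k + 1) = aP R k * (1 - (X : PowerSeries R) ^ (2 * k + 1)) :=
  Finset.prod_range_succ _ _

lemma eP_succ (k : ℕ) : eP R (k + 1) = eP R k * (1 - (X : PowerSeries R) ^ (2 * k + 2)) :=
  Finset.prod_range_succ _ _

lemma gP_succM {k M n : ℕ} (h : n ≤ M) :
    gP R k (M + 1) n = gP R k M n * (1 - (X : PowerSeries R) ^ (2 * (M + k + 1))) := by
  unfold gP
  rw [show M + 1 - n = (M - n) + 1 by omega, Finset.prod_range_succ,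
    show n + k + 1 + (M - n) = M + k + 1 by omega]

lemma gP_shift (k M n : ℕ) : gP R k (M + 1) (n + 1) = gP R (k + 1) M n := by
  unfold gP
  rw [show M + 1 - (n + 1) = M - n by omega]
  apply Finset.prod_congr rfl
  intro j _
  rw [show n + 1 + k + 1 + j = n + (k + 1) + 1 + j by omega]

/-- The key q-Chu–Vandermonde style identity. -/
theorem W_id : ∀ M k : ℕ,
    (∑ n ∈ Finset.range (M + 1),
      (-1 : PowerSeries R) ^ n * (X : PowerSeries R) ^ (n ^ 2) * aP R (n + k)
        * gP R k M n * gb R M n) = aP R k * aP R M := by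
  intro M
  induction M with
  | zero =>
    intro k
    simp only [Nat.zero_add, Finset.sum_range_one, gb_zero_right]
    have h1 : gP R k 0 0 = 1 := by simp [gP]
    have h2 : aP R 0 = 1 := by simp [aP]
    rw [h1, h2]
    simp
  | succ M ih =>
    intro k
    rw [Finset.sum_range_succ']
    have hf0 : (-1 : PowerSeries R) ^ 0 * (X : PowerSeries R) ^ (0 ^ 2) * aP R (0 + k)
        * gP R k (M + 1) 0 * gb R (M + 1) 0
        = (-1 : PowerSeries R) ^ 0 * (X : PowerSeries R) ^ (0 ^ 2) * aP R (0 + k)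
          * gP R k (M + 1) 0 * gb R M 0 := by
      rw [gb_zero_right, gb_zero_right]
    rw [hf0]
    have h1 : ∀ n ∈ Finset.range (M + 1),
        (-1 : PowerSeries R) ^ (n + 1) * (X : PowerSeries R) ^ ((n + 1) ^ 2) * aP R (n + 1 + k)
          * gP R k (M + 1) (n + 1) * gb R (M + 1) (n + 1)
        = ((-1 : PowerSeries R) ^ (n + 1) * (X : PowerSeries R) ^ ((n + 1) ^ 2) * aP R (n + 1 + k)
            * gP R k (M + 1) (n + 1) * gb R M (n + 1))
          + (-((X : PowerSeries R) ^ (2 * M + 1)))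
            * ((-1 : PowerSeries R) ^ n * (X : PowerSeries R) ^ (n ^ 2) * aP R (n + (k + 1))
                * gP R (k + 1) M n * gb R M n) := by
      intro n hn
      have hn' : n ≤ M := by simpa using Nat.lt_succ_iff.mp (Finset.mem_range.mp hn)
      have hgb : gb R (M + 1) (n + 1)
          = (X : PowerSeries R) ^ (2 * (M - n)) * gb R M n + gb R M (n + 1) := rfl
      have hx : (X : PowerSeries R) ^ ((n + 1) ^ 2) * (X : PowerSeries R) ^ (2 * (M - n))
          = (X : PowerSeries R) ^ (n ^ 2) * (X : PowerSeries R) ^ (2 * M + 1) := by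
        rw [← pow_add, ← pow_add]
        congr 1
        have : (n + 1) ^ 2 = n ^ 2 + 2 * n + 1 := by ring
        omega
      have hsign : (-1 : PowerSeries R) ^ (n + 1) = -(-1 : PowerSeries R) ^ n := by
        rw [pow_succ]; ring
      rw [hgb, gP_shift, show n + 1 + k = n + (k + 1) by omega, hsign]
      linear_combination (-((-1 : PowerSeries R) ^ n * aP R (n + (k + 1))
        * gP R (k + 1) M n * gb R M n)) * hx
    rw [Finset.sum_congr rfl h1, Finset.sum_add_distrib]
    have h2 : (∑ n ∈ Finset.range (M + 1),
        (-((X : PowerSeries R) ^ (2 * M + 1)))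
          * ((-1 : PowerSeries R) ^ n * (X : PowerSeries R) ^ (n ^ 2) * aP R (n + (k + 1))
              * gP R (k + 1) M n * gb R M n))
        = (-((X : PowerSeries R) ^ (2 * M + 1))) * (aP R (k + 1) * aP R M) := by
      rw [← Finset.mul_sum, ih (k + 1)]
    rw [add_right_comm, ← Finset.sum_range_succ'
      (fun n => (-1 : PowerSeries R) ^ n * (X : PowerSeries R) ^ (n ^ 2) * aP R (n + k)
        * gP R k (M + 1) n * gb R M n) (M + 1), h2]
    rw [Finset.sum_range_succ, gb_zero_of_lt M (M + 1) (by omega), mul_zero, add_zero]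
    have h3 : ∀ n ∈ Finset.range (M + 1),
        (-1 : PowerSeries R) ^ n * (X : PowerSeries R) ^ (n ^ 2) * aP R (n + k)
          * gP R k (M + 1) n * gb R M n
        = ((-1 : PowerSeries R) ^ n * (X : PowerSeries R) ^ (n ^ 2) * aP R (n + k)
            * gP R k M n * gb R M n) * (1 - (X : PowerSeries R) ^ (2 * (M + k + 1))) := by
      intro n hn
      have hn' : n ≤ M := by simpa using Nat.lt_succ_iff.mp (Finset.mem_range.mp hn)
      rw [gP_succM hn']; ring
    rw [Finset.sum_congr rfl h3, ← Finset.sum_mul, ih k]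
    rw [aP_succ M, aP_succ k]
    have hx2 : (X : PowerSeries R) ^ (2 * M + 1) * (X : PowerSeries R) ^ (2 * k + 1)
        = (X : PowerSeries R) ^ (2 * (M + k + 1)) := by
      rw [← pow_add]; congr 1; ring
    linear_combination (aP R k * aP R M) * hx2

-- Pascal-type relations for GnP
lemma GnP_append {N n : ℕ} (h : n ≤ N) :
    GnP R (N + 1) (n + 1) = GnP R N n * (1 - (X : PowerSeries R) ^ (2 * (N + 1))) := by
  unfold GnP
  rw [Finset.prod_range_succ, show 2 * (N + 1 + 1 + n - (n + 1)) = 2 * (N + 1) by omega]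
  congr 1
  apply Finset.prod_congr rfl
  intro j hj
  rw [show N + 1 + 1 + j - (n + 1) = N + 1 + j - n by omega]

lemma GnP_peel {N n : ℕ} (h : n ≤ N) :
    GnP R N (n + 1) = (1 - (X : PowerSeries R) ^ (2 * (N - n))) * GnP R N n := by
  unfold GnP
  rw [Finset.prod_range_succ', show 2 * (N + 1 + 0 - (n + 1)) = 2 * (N - n) by omega, mul_comm]
  congr 1
  apply Finset.prod_congr rfl
  intro j hj
  rw [show N + 1 + (j + 1) - (n + 1) = N + 1 + j - n by omega]

lemma prodFormula : ∀ N n : ℕ, n ≤ N → eP R n * gb R N n = GnP R N n := by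
  intro N
  induction N with
  | zero =>
    intro n hn
    have : n = 0 := by omega
    subst this
    simp [eP, GnP, gb_zero_right]
  | succ N ih =>
    intro n hn
    match n with
    | 0 => simp [eP, GnP, gb_zero_right]
    | n + 1 =>
      have hn' : n ≤ N := by omega
      show eP R (n + 1) * ((X : PowerSeries R) ^ (2 * (N - n)) * gb R N n + gb R N (n + 1))
        = GnP R (N + 1) (n + 1)
      have claim2 : eP R (n + 1) * gb R N (n + 1)
          = (1 - (X : PowerSeries R) ^ (2 * (N - n))) * GnP R N n := by
        by_cases hb : n + 1 ≤ N
        · rw [← GnP_peel hn', ← ih (n + 1) hb]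
        · have hNn : n = N := by omega
          subst hNn
          rw [gb_zero_of_lt n (n + 1) (by omega), mul_zero, Nat.sub_self, mul_zero, pow_zero,
            sub_self, zero_mul]
      have hx3 : (X : PowerSeries R) ^ (2 * (N - n)) * (X : PowerSeries R) ^ (2 * n + 2)
          = (X : PowerSeries R) ^ (2 * (N + 1)) := by
        rw [← pow_add]; congr 1; omega
      rw [eP_succ] at claim2
      rw [GnP_append hn', eP_succ]
      have hgb := ih n hn'
      linear_combination ((1 - (X:PowerSeries R)^(2*n+2)) * (X : PowerSeries R) ^ (2 * (N - n))) * hgb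
        + claim2 + (- GnP R N n) * hx3
end QSeries

section Helpers
variable {R : Type} [CommRing R]

lemma X_pow_dvd_prod_sub_one {d k : ℕ} {m : ℕ → ℕ} (hm : ∀ j, j < k → d ≤ m j) :
    (X : PowerSeries R) ^ d ∣ (∏ j ∈ Finset.range k, (1 - (X : PowerSeries R) ^ (m j))) - 1 := by
  induction k with
  | zero => simp
  | succ k ih =>
    rw [Finset.prod_range_succ]
    have key : (∏ j ∈ Finset.range k, (1 - (X : PowerSeries R) ^ m j))
          * (1 - (X : PowerSeries R) ^ m k) - 1
        = ((∏ j ∈ Finset.range k, (1 - (X : PowerSeries R) ^ m j)) - 1)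
            * (1 - (X : PowerSeries R) ^ m k) - (X : PowerSeries R) ^ m k := by ring
    rw [key]
    exact dvd_sub ((ih (fun j hj => hm j (by omega))).mul_right _)
      (pow_dvd_pow _ (hm k (by omega)))

lemma isUnit_prod_one_sub (k : ℕ) (m : ℕ → ℕ) (hm : ∀ j, m j ≠ 0) :
    IsUnit (∏ j ∈ Finset.range k, (1 - (X : PowerSeries R) ^ (m j))) := by
  rw [PowerSeries.isUnit_iff_constantCoeff, map_prod]
  have h : ∀ j ∈ Finset.range k, constantCoeff (1 - (X : PowerSeries R) ^ (m j)) = 1 := by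
    intro j _
    rw [map_sub, map_one, map_pow, constantCoeff_X, zero_pow (hm j), sub_zero]
  rw [Finset.prod_congr rfl h, Finset.prod_const_one]
  exact isUnit_one

lemma isUnit_prod_one_add (k : ℕ) (m : ℕ → ℕ) (hm : ∀ j, m j ≠ 0) :
    IsUnit (∏ j ∈ Finset.range k, (1 + (X : PowerSeries R) ^ (m j))) := by
  rw [PowerSeries.isUnit_iff_constantCoeff, map_prod]
  have h : ∀ j ∈ Finset.range k, constantCoeff (1 + (X : PowerSeries R) ^ (m j)) = 1 := by
    intro j _
    rw [map_add, map_one, map_pow, constantCoeff_X, zero_pow (hm j), add_zero]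
  rw [Finset.prod_congr rfl h, Finset.prod_const_one]
  exact isUnit_one

lemma ringInverse_eq_of_mul_eq_one {S : Type} [CommRing S] {a b : S} (h : a * b = 1) :
    Ring.inverse a = b := by
  have ha : IsUnit a := IsUnit.of_mul_eq_one b h
  have h2 : Ring.inverse a * (a * b) = Ring.inverse a := by rw [h, mul_one]
  rw [← mul_assoc, Ring.inverse_mul_cancel a ha, one_mul] at h2
  exact h2.symm

lemma map_ringInverse {A B : Type} [CommRing A] [CommRing B] (f : A →+* B) (u : PowerSeries A)
    (hu : IsUnit u) :
    PowerSeries.map f (Ring.inverse u) = Ring.inverse (PowerSeries.map f u) := by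
  symm
  apply ringInverse_eq_of_mul_eq_one
  rw [← map_mul, Ring.mul_inverse_cancel u hu, map_one]

lemma coeff_eq_of_X_pow_dvd {S : Type} [CommRing S] {F G : PowerSeries S} {n : ℕ}
    (h : (X : PowerSeries S) ^ (n + 1) ∣ F - G) :
    PowerSeries.coeff n F = PowerSeries.coeff n G := by
  have h2 := (PowerSeries.X_pow_dvd_iff.mp h) n (by omega)
  rw [map_sub] at h2
  exact sub_eq_zero.mp h2

lemma dvd_mul_sub_mul' {S : Type} [CommRing S] {d a b c e : S} (h1 : d ∣ a - b)
    (h2 : d ∣ c - e) : d ∣ a * c - b * e := by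
  have key : a * c - b * e = (a - b) * c + b * (c - e) := by ring
  rw [key]
  exact dvd_add (h1.mul_right c) (h2.mul_left b)

lemma dvd_of_unit_mul {S : Type} [CommRing S] {d w y : S} (hw : IsUnit w) (h : d ∣ w * y) :
    d ∣ y := by
  have hy : y = Ring.inverse w * (w * y) := by
    rw [← mul_assoc, Ring.inverse_mul_cancel w hw, one_mul]
  rw [hy]
  exact h.mul_left _

end Helpers

section CharTricks

lemma map_prod_one_sub {A B : Type} [CommRing A] [CommRing B] (f : A →+* B) {k : ℕ} {m : ℕ → ℕ} :
    PowerSeries.map f (∏ j ∈ Finset.range k, (1 - (X : PowerSeries A) ^ (m j)))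
      = ∏ j ∈ Finset.range k, (1 - (X : PowerSeries B) ^ (m j)) := by
  rw [map_prod]
  apply Finset.prod_congr rfl
  intro j _
  rw [map_sub, map_one, map_pow, PowerSeries.map_X]

lemma map_prod_one_add {A B : Type} [CommRing A] [CommRing B] (f : A →+* B) {k : ℕ} {m : ℕ → ℕ} :
    PowerSeries.map f (∏ j ∈ Finset.range k, (1 + (X : PowerSeries A) ^ (m j)))
      = ∏ j ∈ Finset.range k, (1 + (X : PowerSeries B) ^ (m j)) := by
  rw [map_prod]
  apply Finset.prod_congr rfl
  intro j _
  rw [map_add, map_one, map_pow, PowerSeries.map_X]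

lemma four_eq_zero' : (4 : PowerSeries (ZMod 4)) = 0 := by
  have h1 : (4 : PowerSeries (ZMod 4)) = PowerSeries.C (R := ZMod 4) 4 :=
    (map_ofNat (PowerSeries.C (R := ZMod 4)) 4).symm
  rw [h1, show (4 : ZMod 4) = 0 by decide, map_zero]

lemma two_eq_zero' : (2 : PowerSeries (ZMod 2)) = 0 := by
  have h1 : (2 : PowerSeries (ZMod 2)) = PowerSeries.C (R := ZMod 2) 2 :=
    (map_ofNat (PowerSeries.C (R := ZMod 2)) 2).symm
  rw [h1, show (2 : ZMod 2) = 0 by decide, map_zero]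

lemma pow_four_eq (m : ℕ) :
    (1 - (X : PowerSeries (ZMod 4)) ^ m) ^ 4
      = (1 - (X : PowerSeries (ZMod 4)) ^ (2 * m)) ^ 2 := by
  have h4 := four_eq_zero'
  have hx : (X : PowerSeries (ZMod 4)) ^ (2 * m) = ((X : PowerSeries (ZMod 4)) ^ m) ^ 2 := by
    rw [← pow_mul, mul_comm]
  rw [hx]
  linear_combination (-(X : PowerSeries (ZMod 4)) ^ m + 2 * ((X : PowerSeries (ZMod 4)) ^ m) ^ 2
    - ((X : PowerSeries (ZMod 4)) ^ m) ^ 3) * h4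

lemma sq_one_sub_char2 (m : ℕ) :
    (1 - (X : PowerSeries (ZMod 2)) ^ m) ^ 2 = 1 - (X : PowerSeries (ZMod 2)) ^ (2 * m) := by
  have h2 := two_eq_zero'
  have hx : (X : PowerSeries (ZMod 2)) ^ (2 * m) = ((X : PowerSeries (ZMod 2)) ^ m) ^ 2 := by
    rw [← pow_mul, mul_comm]
  rw [hx]
  linear_combination (((X : PowerSeries (ZMod 2)) ^ m) ^ 2 - (X : PowerSeries (ZMod 2)) ^ m) * h2

end CharTricks

section Char4Series

lemma prod_one_add_sq_eq (k : ℕ) :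
    (∏ j ∈ Finset.range k, (1 + (X : PowerSeries (ZMod 4)) ^ (2 * j + 2))) ^ 2
      = (eP (ZMod 4) k) ^ 2 := by
  have key : ∀ k : ℕ, ∃ A B : PowerSeries (ZMod 4),
      (∏ j ∈ Finset.range k, (1 + (X : PowerSeries (ZMod 4)) ^ (2 * j + 2))) - eP (ZMod 4) k
        = 2 * A
      ∧ (∏ j ∈ Finset.range k, (1 + (X : PowerSeries (ZMod 4)) ^ (2 * j + 2))) + eP (ZMod 4) k
        = 2 * B := by
    intro k
    induction k with
    | zero => exact ⟨0, 1, by simp [eP], by simp [eP]; norm_num⟩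
    | succ k ih =>
      obtain ⟨A, B, hA, hB⟩ := ih
      refine ⟨A + (X : PowerSeries (ZMod 4)) ^ (2 * k + 2) * B,
              B + (X : PowerSeries (ZMod 4)) ^ (2 * k + 2) * A, ?_, ?_⟩
      · rw [Finset.prod_range_succ, eP_succ]
        linear_combination hA + (X : PowerSeries (ZMod 4)) ^ (2 * k + 2) * hB
      · rw [Finset.prod_range_succ, eP_succ]
        linear_combination hB + (X : PowerSeries (ZMod 4)) ^ (2 * k + 2) * hA
  obtain ⟨A, B, hA, hB⟩ := key k
  have h4 := four_eq_zero'
  have hP : (∏ j ∈ Finset.range k, (1 + (X : PowerSeries (ZMod 4)) ^ (2 * j + 2)))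
      = eP (ZMod 4) k + 2 * A := by linear_combination hA
  rw [hP]
  linear_combination (A * eP (ZMod 4) k + A ^ 2) * h4

noncomputable def cP (k : ℕ) : PowerSeries (ZMod 4) :=
  ∏ j ∈ Finset.range k, (1 - (X : PowerSeries (ZMod 4)) ^ (4 * j + 2))

lemma aP_pow_four (k : ℕ) : (aP (ZMod 4) k) ^ 4 = (cP k) ^ 2 := by
  unfold aP cP
  rw [← Finset.prod_pow, ← Finset.prod_pow]
  apply Finset.prod_congr rfl
  intro j _
  rw [pow_four_eq, show 2 * (2 * j + 1) = 4 * j + 2 by ring]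

lemma qq_split {R : Type} [CommRing R] (K : ℕ) :
    (∏ j ∈ Finset.range (2 * K), (1 - (X : PowerSeries R) ^ (j + 1))) = aP R K * eP R K := by
  induction K with
  | zero => simp [aP, eP]
  | succ K ih =>
    rw [show 2 * (K + 1) = (2 * K + 1) + 1 by ring, Finset.prod_range_succ,
      Finset.prod_range_succ, ih, aP_succ, eP_succ,
      show 2 * K + 1 + 1 = 2 * K + 2 by ring]
    ring

end Char4Series

section Lift

lemma zmod_lift {z : PowerSeries (ZMod 4)} {d : ℕ}
    (h : (X : PowerSeries (ZMod 2)) ^ d ∣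
      PowerSeries.map (ZMod.castHom (by norm_num : (2:ℕ) ∣ 4) (ZMod 2)) z - 1) :
    (X : PowerSeries (ZMod 4)) ^ d ∣ z ^ 2 - 1 := by
  obtain ⟨s, hs⟩ := h
  set f := ZMod.castHom (by norm_num : (2:ℕ) ∣ 4) (ZMod 2) with hf
  set r : PowerSeries (ZMod 4) :=
    PowerSeries.mk (fun i => ((PowerSeries.coeff i s).val : ZMod 4)) with hrdef
  have hr : PowerSeries.map f r = s := by
    ext i
    rw [PowerSeries.coeff_map, hrdef, PowerSeries.coeff_mk]
    exact (by decide : ∀ a : ZMod 2, f ((ZMod.val a : ZMod 4)) = a) _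
  set y : PowerSeries (ZMod 4) := z - 1 - X ^ d * r with hydef
  have hy : PowerSeries.map f y = 0 := by
    rw [hydef, map_sub, map_sub, map_mul, map_pow, PowerSeries.map_X, map_one, hr, hs]
    ring
  set w : PowerSeries (ZMod 4) :=
    PowerSeries.mk (fun i => if PowerSeries.coeff i y = 2 then (1 : ZMod 4) else 0)
    with hwdef
  have hw : PowerSeries.C (R := ZMod 4) 2 * w = y := by
    ext i
    rw [PowerSeries.coeff_C_mul, hwdef, PowerSeries.coeff_mk]
    have hci : f (PowerSeries.coeff i y) = 0 := by
      rw [← PowerSeries.coeff_map, hy, map_zero]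
    have hker : ∀ c : ZMod 4, f c = 0 → c = 0 ∨ c = 2 := by decide
    rcases hker _ hci with h0 | h2
    · rw [h0, if_neg (by decide : ¬(0 : ZMod 4) = 2), mul_zero]
    · rw [h2, if_pos rfl, mul_one]
  have hz : z = 1 + PowerSeries.C (R := ZMod 4) 2 * w + X ^ d * r := by
    rw [hw, hydef]; ring
  have h4 : (4 : PowerSeries (ZMod 4)) = 0 := four_eq_zero'
  have hC2 : PowerSeries.C (R := ZMod 4) 2 = (2 : PowerSeries (ZMod 4)) := map_ofNat _ 2
  rw [hC2] at hz
  refine ⟨X ^ d * r ^ 2 + 2 * r, ?_⟩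
  rw [hz]
  linear_combination (w ^ 2 + w + w * ((X : PowerSeries (ZMod 4)) ^ d * r)) * h4

lemma char2_main (n : ℕ) :
    (X : PowerSeries (ZMod 2)) ^ (n + 1) ∣
      PowerSeries.map (ZMod.castHom (by norm_num : (2:ℕ) ∣ 4) (ZMod 2))
        (cP (n + 1) * eP (ZMod 4) (n + 1)) - 1 := by
  set K := n + 1 with hK
  have hmap : PowerSeries.map (ZMod.castHom (by norm_num : (2:ℕ) ∣ 4) (ZMod 2))
      (cP K * eP (ZMod 4) K)
      = (∏ j ∈ Finset.range K, (1 - (X : PowerSeries (ZMod 2)) ^ (4 * j + 2)))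
        * eP (ZMod 2) K := by
    rw [map_mul]
    unfold cP eP
    rw [map_prod_one_sub, map_prod_one_sub _]
  have e1 : (aP (ZMod 2) K) ^ 2
      = ∏ j ∈ Finset.range K, (1 - (X : PowerSeries (ZMod 2)) ^ (4 * j + 2)) := by
    unfold aP
    rw [← Finset.prod_pow]
    apply Finset.prod_congr rfl
    intro j _
    rw [sq_one_sub_char2, show 2 * (2 * j + 1) = 4 * j + 2 by ring]
  have e2 : (∏ j ∈ Finset.range K, (1 - (X : PowerSeries (ZMod 2)) ^ (4 * j + 2)))
      * (eP (ZMod 2) K) ^ 2 = eP (ZMod 2) (2 * K) := by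
    rw [← e1, ← mul_pow, ← qq_split K, ← Finset.prod_pow]
    unfold eP
    apply Finset.prod_congr rfl
    intro j _
    rw [sq_one_sub_char2, show 2 * (j + 1) = 2 * j + 2 by ring]
  have e3 : (X : PowerSeries (ZMod 2)) ^ (n + 1) ∣ eP (ZMod 2) (2 * K) - eP (ZMod 2) K := by
    have hsplit := Finset.prod_range_add
      (fun j => 1 - (X : PowerSeries (ZMod 2)) ^ (2 * j + 2)) K K
    rw [show K + K = 2 * K by ring] at hsplit
    have : eP (ZMod 2) (2 * K) = eP (ZMod 2) K
        * ∏ j ∈ Finset.range K, (1 - (X : PowerSeries (ZMod 2)) ^ (2 * (K + j) + 2)) := by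
      unfold eP
      exact hsplit
    rw [this]
    have hfac : eP (ZMod 2) K
        * (∏ j ∈ Finset.range K, (1 - (X : PowerSeries (ZMod 2)) ^ (2 * (K + j) + 2)))
        - eP (ZMod 2) K
        = eP (ZMod 2) K
          * ((∏ j ∈ Finset.range K, (1 - (X : PowerSeries (ZMod 2)) ^ (2 * (K + j) + 2))) - 1) := by
      ring
    rw [hfac]
    exact (X_pow_dvd_prod_sub_one (fun j hj => by omega)).mul_left _
  have heU : IsUnit (eP (ZMod 2) K) := by
    unfold eP
    exact isUnit_prod_one_sub _ _ (fun j => by omega)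
  apply dvd_of_unit_mul heU
  have hcollect : eP (ZMod 2) K
      * (PowerSeries.map (ZMod.castHom (by norm_num : (2:ℕ) ∣ 4) (ZMod 2))
          (cP K * eP (ZMod 4) K) - 1)
      = eP (ZMod 2) (2 * K) - eP (ZMod 2) K := by
    rw [hmap]
    linear_combination e2
  rw [hcollect]
  exact e3

end Lift

section P3Side

lemma p3_dvd (n : ℕ) :
    (X : PowerSeries (ZMod 4)) ^ (n + 1) ∣
      aP (ZMod 4) n
          * (∏ j ∈ Finset.range (n + 1), (1 - (X : PowerSeries (ZMod 4)) ^ (j + 1))) ^ 3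
        - eP (ZMod 4) n := by
  set K := n + 1 with hK
  set u := ∏ j ∈ Finset.range (n + 1), (1 - (X : PowerSeries (ZMod 4)) ^ (j + 1)) with hu
  have d1 : (X : PowerSeries (ZMod 4)) ^ (n + 1) ∣ aP (ZMod 4) n - aP (ZMod 4) K := by
    rw [hK, aP_succ]
    have hh : aP (ZMod 4) n - aP (ZMod 4) n * (1 - (X : PowerSeries (ZMod 4)) ^ (2 * n + 1))
        = (X : PowerSeries (ZMod 4)) ^ (2 * n + 1) * aP (ZMod 4) n := by ring
    rw [hh]
    exact (pow_dvd_pow _ (by omega)).mul_right _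
  have d2 : (X : PowerSeries (ZMod 4)) ^ (n + 1) ∣ eP (ZMod 4) K - eP (ZMod 4) n := by
    rw [hK, eP_succ]
    have hh : eP (ZMod 4) n * (1 - (X : PowerSeries (ZMod 4)) ^ (2 * n + 2)) - eP (ZMod 4) n
        = -((X : PowerSeries (ZMod 4)) ^ (2 * n + 2) * eP (ZMod 4) n) := by ring
    rw [hh]
    exact dvd_neg.mpr ((pow_dvd_pow _ (by omega)).mul_right _)
  have d3 : (X : PowerSeries (ZMod 4)) ^ (n + 1) ∣ u - aP (ZMod 4) K * eP (ZMod 4) K := by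
    have hsplit := Finset.prod_range_add
      (fun j => 1 - (X : PowerSeries (ZMod 4)) ^ (j + 1)) K K
    rw [show K + K = 2 * K by ring] at hsplit
    rw [← qq_split, hsplit]
    have hfac : u - u * ∏ j ∈ Finset.range K, (1 - (X : PowerSeries (ZMod 4)) ^ (K + j + 1))
        = -(u * ((∏ j ∈ Finset.range K, (1 - (X : PowerSeries (ZMod 4)) ^ (K + j + 1))) - 1)) := by
      ring
    rw [hfac]
    exact dvd_neg.mpr ((X_pow_dvd_prod_sub_one (fun j hj => by omega)).mul_left _)
  have d5 : (X : PowerSeries (ZMod 4)) ^ (n + 1) ∣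
      aP (ZMod 4) n * u ^ 3 - aP (ZMod 4) K * (aP (ZMod 4) K * eP (ZMod 4) K) ^ 3 := by
    have hcube : (X : PowerSeries (ZMod 4)) ^ (n + 1) ∣
        u ^ 3 - (aP (ZMod 4) K * eP (ZMod 4) K) ^ 3 := by
      have h1 := dvd_mul_sub_mul' d3 d3
      have h2 := dvd_mul_sub_mul' h1 d3
      have hh : u * u * u - aP (ZMod 4) K * eP (ZMod 4) K * (aP (ZMod 4) K * eP (ZMod 4) K)
          * (aP (ZMod 4) K * eP (ZMod 4) K)
          = u ^ 3 - (aP (ZMod 4) K * eP (ZMod 4) K) ^ 3 := by ring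
      rwa [hh] at h2
    exact dvd_mul_sub_mul' d1 hcube
  have d6 : aP (ZMod 4) K * (aP (ZMod 4) K * eP (ZMod 4) K) ^ 3
      = (cP K * eP (ZMod 4) K) ^ 2 * eP (ZMod 4) K := by
    have hh : aP (ZMod 4) K * (aP (ZMod 4) K * eP (ZMod 4) K) ^ 3
        = (aP (ZMod 4) K) ^ 4 * (eP (ZMod 4) K) ^ 3 := by ring
    rw [hh, aP_pow_four]
    ring
  have d7 : (X : PowerSeries (ZMod 4)) ^ (n + 1) ∣ (cP K * eP (ZMod 4) K) ^ 2 - 1 :=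
    zmod_lift (char2_main n)
  have d8 : (X : PowerSeries (ZMod 4)) ^ (n + 1) ∣
      (cP K * eP (ZMod 4) K) ^ 2 * eP (ZMod 4) K - eP (ZMod 4) K := by
    have hh : (cP K * eP (ZMod 4) K) ^ 2 * eP (ZMod 4) K - eP (ZMod 4) K
        = ((cP K * eP (ZMod 4) K) ^ 2 - 1) * eP (ZMod 4) K := by ring
    rw [hh]
    exact d7.mul_right _
  have final : aP (ZMod 4) n * u ^ 3 - eP (ZMod 4) n
      = (aP (ZMod 4) n * u ^ 3 - aP (ZMod 4) K * (aP (ZMod 4) K * eP (ZMod 4) K) ^ 3)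
        + ((cP K * eP (ZMod 4) K) ^ 2 * eP (ZMod 4) K - eP (ZMod 4) K)
        + (eP (ZMod 4) K - eP (ZMod 4) n) := by
    rw [← d6]; ring
  rw [final]
  exact dvd_add (dvd_add d5 d8) d2

lemma p3_side (n : ℕ) :
    PowerSeries.coeff n (aP (ZMod 4) n * Ring.inverse (eP (ZMod 4) n))
      = PowerSeries.coeff n (PowerSeries.map (Int.castRingHom (ZMod 4))
          (Ring.inverse
            ((∏ j ∈ Finset.range (n + 1), (1 - (X : PowerSeries ℤ) ^ (j + 1))) ^ 3))) := by
  have huZ : IsUnit ((∏ j ∈ Finset.range (n + 1), (1 - (X : PowerSeries ℤ) ^ (j + 1))) ^ 3) :=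
    (isUnit_prod_one_sub _ _ (fun j => by omega)).pow 3
  rw [map_ringInverse _ _ huZ, map_pow, map_prod_one_sub _]
  set u := ∏ j ∈ Finset.range (n + 1), (1 - (X : PowerSeries (ZMod 4)) ^ (j + 1)) with hu
  have hvU : IsUnit (u ^ 3) := (isUnit_prod_one_sub _ _ (fun j => by omega)).pow 3
  have heU : IsUnit (eP (ZMod 4) n) := by
    unfold eP
    exact isUnit_prod_one_sub _ _ (fun j => by omega)
  apply coeff_eq_of_X_pow_dvd
  have h1 : eP (ZMod 4) n * Ring.inverse (eP (ZMod 4) n) = 1 := Ring.mul_inverse_cancel _ heU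
  have h2 : u ^ 3 * Ring.inverse (u ^ 3) = 1 := Ring.mul_inverse_cancel _ hvU
  have key : aP (ZMod 4) n * Ring.inverse (eP (ZMod 4) n) - Ring.inverse (u ^ 3)
      = Ring.inverse (eP (ZMod 4) n) * Ring.inverse (u ^ 3)
        * (aP (ZMod 4) n * u ^ 3 - eP (ZMod 4) n) := by
    linear_combination (-(aP (ZMod 4) n * Ring.inverse (eP (ZMod 4) n))) * h2
      + Ring.inverse (u ^ 3) * h1
  rw [key]
  exact (p3_dvd n).mul_left _

end P3Side

/-- The `n`-th summand of the second order mock theta function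
`μ(q) = Σ_{n≥0} (−1)^n q^(n^2) (q;q^2)_n / (−q^2;q^2)_n^2`. -/
noncomputable def muTerm (n : ℕ) : PowerSeries ℤ :=
  (-1 : PowerSeries ℤ) ^ n * (PowerSeries.X : PowerSeries ℤ) ^ (n ^ 2)
    * (∏ j ∈ Finset.range n, (1 - (PowerSeries.X : PowerSeries ℤ) ^ (2 * j + 1)))
    * Ring.inverse
        ((∏ j ∈ Finset.range n, (1 + (PowerSeries.X : PowerSeries ℤ) ^ (2 * j + 2))) ^ 2)

section MuSide

lemma map_muTerm (k : ℕ) :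
    PowerSeries.map (Int.castRingHom (ZMod 4)) (muTerm k)
      = (-1 : PowerSeries (ZMod 4)) ^ k * (X : PowerSeries (ZMod 4)) ^ (k ^ 2)
          * aP (ZMod 4) k * Ring.inverse ((eP (ZMod 4) k) ^ 2) := by
  unfold muTerm
  have huZ : IsUnit ((∏ j ∈ Finset.range k, (1 + (X : PowerSeries ℤ) ^ (2 * j + 2))) ^ 2) :=
    (isUnit_prod_one_add _ _ (fun j => by omega)).pow 2
  rw [map_mul, map_ringInverse _ _ huZ, map_mul, map_mul, map_pow, map_neg, map_one, map_pow,
    PowerSeries.map_X, map_pow, map_prod_one_add _, map_prod_one_sub _, prod_one_add_sq_eq]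
  rfl

set_option maxHeartbeats 1000000 in
lemma mu_side (n : ℕ) :
    PowerSeries.coeff n (PowerSeries.map (Int.castRingHom (ZMod 4))
        (∑ k ∈ Finset.range (n + 1), muTerm k))
      = PowerSeries.coeff n (aP (ZMod 4) n * Ring.inverse (eP (ZMod 4) n)) := by
  rw [map_sum]
  have heU : IsUnit (eP (ZMod 4) n) := by
    unfold eP
    exact isUnit_prod_one_sub _ _ (fun j => by omega)
  have heU2 : IsUnit ((eP (ZMod 4) n) ^ 2) := heU.pow 2
  set Q := Ring.inverse ((eP (ZMod 4) n) ^ 2) with hQ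
  have hsplit : ∀ k, k ≤ n → eP (ZMod 4) n = eP (ZMod 4) k * gP (ZMod 4) 0 n k := by
    intro k hk
    have hadd := Finset.prod_range_add
      (fun j => 1 - (X : PowerSeries (ZMod 4)) ^ (2 * j + 2)) k (n - k)
    rw [show k + (n - k) = n by omega] at hadd
    unfold eP gP
    rw [hadd]
    congr 1
    apply Finset.prod_congr rfl
    intro j _
    rw [show 2 * (k + j) + 2 = 2 * (k + 0 + 1 + j) by ring]
  have hterm : ∀ k ∈ Finset.range (n + 1),
      PowerSeries.map (Int.castRingHom (ZMod 4)) (muTerm k)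
        = ((-1 : PowerSeries (ZMod 4)) ^ k * (X : PowerSeries (ZMod 4)) ^ (k ^ 2)
            * aP (ZMod 4) k * (gP (ZMod 4) 0 n k) ^ 2) * Q := by
    intro k hk
    have hk' : k ≤ n := by
      have := Finset.mem_range.mp hk
      omega
    rw [map_muTerm]
    have hinv : Ring.inverse ((eP (ZMod 4) k) ^ 2) = (gP (ZMod 4) 0 n k) ^ 2 * Q := by
      apply ringInverse_eq_of_mul_eq_one
      rw [hQ, ← mul_assoc, ← mul_pow, ← hsplit k hk']
      exact Ring.mul_inverse_cancel _ heU2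
    rw [hinv]
    ring
  rw [Finset.sum_congr rfl hterm, ← Finset.sum_mul]
  have hinv2 : Ring.inverse (eP (ZMod 4) n) = eP (ZMod 4) n * Q := by
    apply ringInverse_eq_of_mul_eq_one
    rw [hQ, ← mul_assoc, ← sq]
    exact Ring.mul_inverse_cancel _ heU2
  rw [hinv2, ← mul_assoc]
  apply coeff_eq_of_X_pow_dvd
  have hfactor : (∑ k ∈ Finset.range (n + 1),
        (-1 : PowerSeries (ZMod 4)) ^ k * (X : PowerSeries (ZMod 4)) ^ (k ^ 2)
          * aP (ZMod 4) k * (gP (ZMod 4) 0 n k) ^ 2) * Q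
      - aP (ZMod 4) n * eP (ZMod 4) n * Q
      = ((∑ k ∈ Finset.range (n + 1),
          (-1 : PowerSeries (ZMod 4)) ^ k * (X : PowerSeries (ZMod 4)) ^ (k ^ 2)
            * aP (ZMod 4) k * (gP (ZMod 4) 0 n k) ^ 2)
        - aP (ZMod 4) n * eP (ZMod 4) n) * Q := by ring
  rw [hfactor]
  apply Dvd.dvd.mul_right
  have hW := W_id (R := ZMod 4) n 0
  have ha0 : aP (ZMod 4) 0 = 1 := Finset.prod_range_zero _
  simp only [Nat.add_zero, ha0, one_mul] at hW
  have hprod : aP (ZMod 4) n * eP (ZMod 4) n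
      = ∑ k ∈ Finset.range (n + 1),
          (-1 : PowerSeries (ZMod 4)) ^ k * (X : PowerSeries (ZMod 4)) ^ (k ^ 2)
            * aP (ZMod 4) k * (gP (ZMod 4) 0 n k) ^ 2 * GnP (ZMod 4) n k := by
    rw [← hW, Finset.sum_mul]
    apply Finset.sum_congr rfl
    intro k hk
    have hk' : k ≤ n := by
      have := Finset.mem_range.mp hk
      omega
    rw [hsplit k hk']
    have hpf := prodFormula (R := ZMod 4) n k hk'
    linear_combination ((-1 : PowerSeries (ZMod 4)) ^ k * (X : PowerSeries (ZMod 4)) ^ (k ^ 2)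
      * aP (ZMod 4) k * (gP (ZMod 4) 0 n k) ^ 2) * hpf
  rw [hprod, ← Finset.sum_sub_distrib]
  apply Finset.dvd_sum
  intro k hk
  have hk' : k ≤ n := by
    have := Finset.mem_range.mp hk
    omega
  have hsub : (-1 : PowerSeries (ZMod 4)) ^ k * (X : PowerSeries (ZMod 4)) ^ (k ^ 2)
        * aP (ZMod 4) k * (gP (ZMod 4) 0 n k) ^ 2
      - (-1 : PowerSeries (ZMod 4)) ^ k * (X : PowerSeries (ZMod 4)) ^ (k ^ 2)
        * aP (ZMod 4) k * (gP (ZMod 4) 0 n k) ^ 2 * GnP (ZMod 4) n k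
      = ((-1 : PowerSeries (ZMod 4)) ^ k * aP (ZMod 4) k * (gP (ZMod 4) 0 n k) ^ 2)
          * ((X : PowerSeries (ZMod 4)) ^ (k ^ 2) * (1 - GnP (ZMod 4) n k)) := by ring
  rw [hsub]
  apply Dvd.dvd.mul_left
  rcases Nat.eq_zero_or_pos k with rfl | hpos
  · have hG0 : GnP (ZMod 4) n 0 = 1 := Finset.prod_range_zero _
    rw [hG0]
    simp
  · have hdvd1 : (X : PowerSeries (ZMod 4)) ^ (2 * (n + 1 - k)) ∣ GnP (ZMod 4) n k - 1 := by
      unfold GnP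
      exact X_pow_dvd_prod_sub_one (fun j hj => by omega)
    obtain ⟨c, hc⟩ := hdvd1
    have hGn : GnP (ZMod 4) n k
        = 1 + (X : PowerSeries (ZMod 4)) ^ (2 * (n + 1 - k)) * c := by linear_combination hc
    rw [hGn]
    have hh : (X : PowerSeries (ZMod 4)) ^ (k ^ 2)
          * (1 - (1 + (X : PowerSeries (ZMod 4)) ^ (2 * (n + 1 - k)) * c))
        = -(((X : PowerSeries (ZMod 4)) ^ (k ^ 2)
            * (X : PowerSeries (ZMod 4)) ^ (2 * (n + 1 - k))) * c) := by ring
    rw [hh, ← pow_add]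
    apply dvd_neg.mpr
    apply Dvd.dvd.mul_right
    apply pow_dvd_pow
    obtain ⟨m, rfl⟩ : ∃ m, k = m + 1 := ⟨k - 1, by omega⟩
    have hsq : (m + 1) ^ 2 = m ^ 2 + 2 * m + 1 := by ring
    omega

end MuSide

/-- `Pmu N` is the coefficient of `q^N` in `μ(q)`; since the `n`-th summand has order
at least `n^2 > N` for `n > N`, the partial sum over `n ≤ N` suffices. -/
noncomputable def Pmu (N : ℕ) : ℤ :=
  PowerSeries.coeff N (∑ n ∈ Finset.range (N + 1), muTerm n)

/-- `p3 n` is the number of 3-coloured partitions of `n`, i.e. the coefficient of `q^n` in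
`1/∏_{j≥1}(1−q^j)^3`; the partial product over `1 ≤ j ≤ n+1` suffices. -/
noncomputable def p3 (n : ℕ) : ℤ :=
  PowerSeries.coeff n
    (Ring.inverse ((∏ j ∈ Finset.range (n + 1),
        (1 - (PowerSeries.X : PowerSeries ℤ) ^ (j + 1))) ^ 3))

/-- `P_μ(n) ≡ p_3(n) (mod 4)` for every `n ≥ 0`. -/
theorem Pmu_congr_p3 (n : ℕ) : Pmu n ≡ p3 n [ZMOD 4] := by
  apply (ZMod.intCast_eq_intCast_iff _ _ _).mp
  unfold Pmu p3
  rw [show ∀ F : PowerSeries ℤ, ((PowerSeries.coeff n F : ℤ) : ZMod 4)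
      = PowerSeries.coeff n (PowerSeries.map (Int.castRingHom (ZMod 4)) F) from
    fun F => by rw [PowerSeries.coeff_map]; rfl]
  rw [show ∀ F : PowerSeries ℤ, ((PowerSeries.coeff n F : ℤ) : ZMod 4)
      = PowerSeries.coeff n (PowerSeries.map (Int.castRingHom (ZMod 4)) F) from
    fun F => by rw [PowerSeries.coeff_map]; rfl]
  rw [mu_side n, p3_side n]
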